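/- Let {Y_n}_{n≥1} be i.i.d. with distribution function F, M_n = max(Y_1,...,Y_n), and {b_n} non-decreasing with g_n = 1 − F(b_n) → 0. If liminf_{n→∞} n·g_n < ∞, then P(M_n > b_n eventually) < 1 (in fact, under the 0–1 law, it equals 0). -/

import Mathlib

open MeasureTheory ProbabilityTheory Filter Set
open scoped ENNReal

lemma exp_neg_two_mul_le {x : ℝ} (h0 : 0 ≤ x) (h2 : x ≤ 1/2) :
    Real.exp (-(2*x)) ≤ 1 - x := by
  have he := Real.add_one_le_exp (2*x)
  have hef : Real.exp (-(2*x)) * Real.exp (2*x) = 1 := by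
    rw [← Real.exp_add]; simp
  nlinarith [Real.exp_pos (-(2*x))]

/-- If `g n = 1 − F (b n) → 0` and `liminf n·g n < ∞` (i.e. `n·g n` is bounded along a
subsequence), then the probability that eventually `M n > b n` is 0. -/
theorem max_crossing_prob_zero
    {Ω : Type*} [MeasurableSpace Ω] (P : Measure Ω) [IsProbabilityMeasure P]
    (F : ℝ → ℝ) (hFmono : Monotone F)
    (Y : ℕ → Ω → ℝ) (hY : ∀ n, Measurable (Y n))
    (hindep : iIndepFun Y P)
    (hident : ∀ n, P.map (Y n) = P.map (Y 0))
    (hdf : ∀ x, (P {ω | Y 0 ω ≤ x}).toReal = F x)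
    (b : ℕ → ℝ) (hb : Monotone b)
    (hg0 : Tendsto (fun n => 1 - F (b n)) atTop (nhds 0))
    (hliminf : ∃ C : ℝ, ∃ᶠ n : ℕ in atTop, (n : ℝ) * (1 - F (b n)) ≤ C) :
    P {ω | ∀ᶠ n in atTop,
        b n < (Finset.range (n + 1)).sup' (by simp) fun k => Y k ω} = 0 := by
  classical
  obtain ⟨C, hC⟩ := hliminf
  -- basic facts about the one-dimensional distribution
  set q : ℕ → ℝ≥0∞ := fun n => P (Y 0 ⁻¹' Set.Iic (b n)) with hq
  have hqk : ∀ k n, P (Y k ⁻¹' Set.Iic (b n)) = q n := by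
    intro k n
    calc P (Y k ⁻¹' Set.Iic (b n))
        = (P.map (Y k)) (Set.Iic (b n)) := (Measure.map_apply (hY k) measurableSet_Iic).symm
      _ = (P.map (Y 0)) (Set.Iic (b n)) := by rw [hident k]
      _ = P (Y 0 ⁻¹' Set.Iic (b n)) := Measure.map_apply (hY 0) measurableSet_Iic
      _ = q n := rfl
  have hqF : ∀ n, (q n).toReal = F (b n) := fun n => hdf (b n)
  have hqne : ∀ n, q n ≠ ⊤ := fun n => measure_ne_top P _
  have hq1 : ∀ n, q n ≤ 1 := fun n => prob_le_one
  have hqof : ∀ n, q n = ENNReal.ofReal (F (b n)) := by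
    intro n; rw [← hqF n, ENNReal.ofReal_toReal (hqne n)]
  have hF0 : ∀ n, 0 ≤ F (b n) := fun n => (hqF n) ▸ ENNReal.toReal_nonneg
  have hF1 : ∀ n, F (b n) ≤ 1 := by
    intro n
    rw [← hqF n]
    exact ENNReal.toReal_le_of_le_ofReal zero_le_one (by simpa using hq1 n)
  -- the events A n = {∀ k ≤ n, Y k ≤ b n}
  set A : ℕ → Set Ω := fun n => ⋂ k ∈ Finset.range (n+1), Y k ⁻¹' Set.Iic (b n) with hA
  have hAmeas : ∀ n, MeasurableSet (A n) := by
    intro n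
    exact MeasurableSet.iInter fun k => MeasurableSet.iInter fun _ =>
      (hY k) measurableSet_Iic
  have hAprob : ∀ n, P (A n) = q n ^ (n+1) := by
    intro n
    rw [hA]
    rw [hindep.meas_biInter (fun k _ => ⟨Set.Iic (b n), measurableSet_Iic, rfl⟩)]
    rw [Finset.prod_congr rfl (fun k _ => hqk k n), Finset.prod_const, Finset.card_range]
  -- the lower bound δ along a subsequence
  set δ : ℝ≥0∞ := ENNReal.ofReal (Real.exp (-(2*C+1))) with hδ
  have hδpos : 0 < δ := by
    rw [hδ]; exact ENNReal.ofReal_pos.2 (Real.exp_pos _)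
  have hfreq : ∃ᶠ n in atTop, δ ≤ P (A n) := by
    have hev : ∀ᶠ n : ℕ in atTop, 1 - F (b n) ≤ 1/2 :=
      hg0.eventually_le_const (by norm_num)
    refine (hC.and_eventually hev).mono ?_
    rintro n ⟨hn1, hn2⟩
    set g := 1 - F (b n) with hgdef
    have hg0' : 0 ≤ g := by rw [hgdef]; linarith [hF1 n]
    have key : Real.exp (-(2*C+1)) ≤ F (b n) ^ (n+1) := by
      have h1 : Real.exp (-(2*C+1)) ≤ Real.exp (-(2 * ((n+1 : ℕ) * g))) := by
        apply Real.exp_le_exp.2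
        have : ((n+1 : ℕ) : ℝ) * g = (n : ℝ) * g + g := by push_cast; ring
        rw [this]; linarith
      have h2 : Real.exp (-(2 * ((n+1 : ℕ) * g))) = Real.exp (-(2*g)) ^ (n+1) := by
        rw [← Real.exp_nat_mul]; ring_nf
      have h3 : Real.exp (-(2*g)) ^ (n+1) ≤ F (b n) ^ (n+1) := by
        apply pow_le_pow_left₀ (Real.exp_nonneg _)
        have := exp_neg_two_mul_le hg0' hn2
        rw [hgdef] at this ⊢; linarith
      calc Real.exp (-(2*C+1)) ≤ _ := h1
        _ = _ := h2
        _ ≤ _ := h3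
    rw [hAprob n, hqof n, ← ENNReal.ofReal_pow (hF0 n), hδ]
    exact ENNReal.ofReal_le_ofReal key
  -- P(limsup A n) ≥ δ
  set U : ℕ → Set Ω := fun N => ⋃ n, ⋃ (_ : N ≤ n), A n with hU
  have hUmeas : ∀ N, MeasurableSet (U N) :=
    fun N => MeasurableSet.iUnion fun n => MeasurableSet.iUnion fun _ => hAmeas n
  have hUdelta : ∀ N, δ ≤ P (U N) := by
    intro N
    obtain ⟨n, hnN, hn⟩ := (frequently_atTop.1 hfreq) N
    exact hn.trans (measure_mono (Set.subset_iUnion₂ (s := fun n _ => A n) n hnN))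
  have hUanti : Antitone U := by
    intro N M hNM
    refine Set.iUnion₂_subset fun n hn => Set.subset_iUnion₂ (s := fun n _ => A n) n (hNM.trans hn)
  have hT0 : δ ≤ P (⋂ N, U N) := by
    refine ge_of_tendsto
      (tendsto_measure_iInter_atTop (fun N => (hUmeas N).nullMeasurableSet) hUanti
        ⟨0, measure_ne_top P _⟩) (Eventually.of_forall hUdelta)
  -- tail events
  set T : ℕ → Set Ω := fun m => ⋂ N, ⋃ n, ⋃ (_ : N ≤ n),
    ⋂ k, ⋂ (_ : m ≤ k), ⋂ (_ : k ≤ n), Y k ⁻¹' Set.Iic (b n) with hT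
  have hTmem : ∀ m ω, ω ∈ T m ↔
      ∃ᶠ n in atTop, ∀ k, m ≤ k → k ≤ n → Y k ω ≤ b n := by
    intro m ω
    rw [frequently_atTop]
    simp [hT, Set.mem_iInter, Set.mem_iUnion]
  have hTmono : Monotone T := by
    intro m m' hmm'
    intro ω hω
    rw [hTmem] at hω ⊢
    exact hω.mono fun n h k hk hk' => h k (hmm'.trans hk) hk'
  have hT0eq : ⋂ N, U N = T 0 := by
    ext ω
    rw [hTmem]
    simp only [Set.mem_iInter, hU, Set.mem_iUnion, hA, frequently_atTop]
    constructor
    · intro h N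
      obtain ⟨n, hn, h2⟩ := h N
      refine ⟨n, hn, fun k _ hk => ?_⟩
      simpa using h2 k (Finset.mem_range.2 (Nat.lt_succ_of_le hk))
    · intro h N
      obtain ⟨n, hn, h2⟩ := h N
      refine ⟨n, hn, fun k hk => ?_⟩
      simpa using h2 k (Nat.zero_le k) (Nat.lt_succ_iff.1 (Finset.mem_range.1 hk))
  -- Kolmogorov 0-1 law for the tail event ⋃ m, T m
  set s : ℕ → MeasurableSpace Ω := fun k => MeasurableSpace.comap (Y k) Real.measurableSpace
    with hs
  have hTail : MeasurableSet[limsup s atTop] (⋃ m, T m) := by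
    rw [limsup_eq_iInf_iSup_of_nat, MeasurableSpace.measurableSet_iInf]
    intro n
    have hrw : (⋃ m, T m) = ⋃ m, T (m + n) := by
      apply Set.Subset.antisymm
      · exact Set.iUnion_subset fun m => (hTmono (Nat.le_add_right m n)).trans
          (Set.subset_iUnion (fun m => T (m + n)) m)
      · exact Set.iUnion_subset fun m => Set.subset_iUnion T (m + n)
    rw [hrw]
    apply MeasurableSet.iUnion
    intro m
    apply MeasurableSet.iInter; intro N
    apply MeasurableSet.iUnion; intro n'
    apply MeasurableSet.iUnion; intro _
    apply MeasurableSet.iInter; intro k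
    apply MeasurableSet.iInter; intro hk
    apply MeasurableSet.iInter; intro _
    have hsk : s k ≤ ⨆ i ≥ n, s i :=
      le_iSup₂ (f := fun i (_ : i ≥ n) => s i) k (le_trans (Nat.le_add_left n m) hk)
    exact hsk _ ⟨Set.Iic (b n'), measurableSet_Iic, rfl⟩
  have h01 := measure_zero_or_one_of_measurableSet_limsup_atTop
    (fun k => (hY k).comap_le) hindep.iIndep hTail
  have hTunion1 : P (⋃ m, T m) = 1 := by
    rcases h01 with h0 | h1
    · exfalso
      have : δ ≤ P (⋃ m, T m) := by
        rw [hT0eq] at hT0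
        exact hT0.trans (measure_mono (Set.subset_iUnion T 0))
      rw [h0] at this
      exact absurd (le_antisymm (nonpos_iff_eq_zero.1 this ▸ le_refl _) hδpos.le) hδpos.ne'
    · exact h1
  -- the a.s. set G
  have hGnull : P (⋃ k, ⋂ N, Y k ⁻¹' Set.Ioi (b N)) = 0 := by
    apply measure_iUnion_null
    intro k
    have hle : ∀ N, P (⋂ N, Y k ⁻¹' Set.Ioi (b N)) ≤ ENNReal.ofReal (1 - F (b N)) := by
      intro N
      have h1 : P (⋂ N, Y k ⁻¹' Set.Ioi (b N)) ≤ P (Y k ⁻¹' Set.Ioi (b N)) :=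
        measure_mono (Set.iInter_subset _ N)
      have h2 : Y k ⁻¹' Set.Ioi (b N) = (Y k ⁻¹' Set.Iic (b N))ᶜ := by
        ext ω; simp [not_le]
      have h3 : P (Y k ⁻¹' Set.Ioi (b N)) = 1 - q N := by
        rw [h2, measure_compl ((hY k) measurableSet_Iic) (measure_ne_top P _), hqk k N,
          measure_univ]
      have h4 : (1 : ℝ≥0∞) - q N = ENNReal.ofReal (1 - F (b N)) := by
        rw [hqof N, ← ENNReal.ofReal_one, ← ENNReal.ofReal_sub _ (hF0 N)]
      rw [h3, h4] at h1
      exact h1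
    have := ge_of_tendsto'
      ((ENNReal.tendsto_ofReal hg0).comp (tendsto_id (α := ℕ)) |>.congr (fun n => rfl))
      (fun N => hle N)
    simpa using this
  -- a.e. comparison: (⋃ m, T m) \ (bad set) ⊆ T 0
  have hsubset : (⋃ m, T m) ⊆ T 0 ∪ (⋃ k, ⋂ N, Y k ⁻¹' Set.Ioi (b N)) := by
    intro ω hω
    by_cases hG : ω ∈ ⋃ k, ⋂ N, Y k ⁻¹' Set.Ioi (b N)
    · exact Or.inr hG
    left
    obtain ⟨m, hm⟩ := Set.mem_iUnion.1 hω
    rw [hTmem] at hm ⊢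
    -- for each k < m, eventually Y k ω ≤ b N
    have hek : ∀ k, ∀ᶠ N in atTop, Y k ω ≤ b N := by
      intro k
      simp only [Set.mem_iUnion, Set.mem_iInter, Set.mem_preimage, Set.mem_Ioi, not_exists,
        not_forall, not_lt] at hG
      obtain ⟨N0, hN0⟩ := hG k
      exact eventually_atTop.2 ⟨N0, fun N hN => hN0.trans (hb hN)⟩
    have hev : ∀ᶠ N in atTop, ∀ k ∈ Finset.range m, Y k ω ≤ b N :=
      (Filter.eventually_all_finset _).2 fun k _ => hek k
    have hevm : ∀ᶠ N : ℕ in atTop, m ≤ N := eventually_atTop.2 ⟨m, fun N hN => hN⟩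
    refine (hm.and_eventually (hev.and hevm)).mono ?_
    rintro N ⟨h1, h2, h3⟩ k _ hkN
    by_cases hkm : k < m
    · exact h2 k (Finset.mem_range.2 hkm)
    · exact h1 k (Nat.le_of_not_lt hkm) hkN
  have hT0prob : P (T 0) = 1 := by
    have h1 : (1 : ℝ≥0∞) = P (⋃ m, T m) := hTunion1.symm
    have h2 : P (⋃ m, T m) ≤ P (T 0) + P (⋃ k, ⋂ N, Y k ⁻¹' Set.Ioi (b N)) :=
      (measure_mono hsubset).trans (measure_union_le _ _)
    rw [hGnull, add_zero] at h2
    exact le_antisymm prob_le_one (h1 ▸ h2)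
  -- conclude
  have hfinal : {ω | ∀ᶠ n in atTop,
      b n < (Finset.range (n + 1)).sup' (by simp) fun k => Y k ω} = (T 0)ᶜ := by
    ext ω
    simp only [Set.mem_setOf_eq, Set.mem_compl_iff, hTmem, not_frequently]
    apply eventually_congr
    apply Eventually.of_forall
    intro n
    rw [Finset.lt_sup'_iff]
    constructor
    · rintro ⟨k, hk, hlt⟩ h
      exact absurd (h k (Nat.zero_le k) (Nat.lt_succ_iff.1 (Finset.mem_range.1 hk))) (not_le.2 hlt)
    · intro h
      push_neg at h
      obtain ⟨k, _, hk2, hk3⟩ := h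
      exact ⟨k, Finset.mem_range.2 (Nat.lt_succ_of_le hk2), hk3⟩
  have hTmeas : MeasurableSet (T 0) := by
    apply MeasurableSet.iInter; intro N
    apply MeasurableSet.iUnion; intro n
    apply MeasurableSet.iUnion; intro _
    apply MeasurableSet.iInter; intro k
    apply MeasurableSet.iInter; intro _
    apply MeasurableSet.iInter; intro _
    exact (hY k) measurableSet_Iic
  rw [hfinal, measure_compl hTmeas (measure_ne_top P _), hT0prob, measure_univ, tsub_self]
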